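/- Let T, Ĉ be real numbers with T > 1, 0 < Ĉ < 1 and TĈ < 1, and define L₉(θ) = TĈ − Ĉ + (1 − TĈ)·cos²θ. Define I(θ) = (√(1 − TĈ)·cos θ + √(L₉(θ)))^{√(1−TĈ)} for θ ∈ ℝ. Then the base √(1 − TĈ)·cos θ + √(L₉(θ)) is strictly positive for every θ ∈ ℝ, I is differentiable, and (log I)'(θ) = −(1 − TĈ)·sin θ/√(L₉(θ)) for all θ ∈ ℝ. -/

import Mathlib

open Real Set

/-- The integration producing Formula (5.26): the explicit function
`I = (√(1 − TĈ)·cos θ + √L₉)^{√(1−TĈ)}` has strictly positive base, is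
differentiable, and solves `(log I)' = −(1 − TĈ)·sin θ/√L₉` on `ℝ`. -/
theorem stmt_13
    (T C : ℝ) (hT : 1 < T) (hC0 : 0 < C) (hC1 : C < 1) (hTC : T * C < 1)
    (L₉ : ℝ → ℝ)
    (hL₉ : ∀ θ : ℝ, L₉ θ = T * C - C + (1 - T * C) * (Real.cos θ) ^ 2)
    (I : ℝ → ℝ)
    (hI : ∀ θ : ℝ,
      I θ = (Real.sqrt (1 - T * C) * Real.cos θ + Real.sqrt (L₉ θ))
              ^ Real.sqrt (1 - T * C)) :
    (∀ θ : ℝ, 0 < Real.sqrt (1 - T * C) * Real.cos θ + Real.sqrt (L₉ θ)) ∧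
    Differentiable ℝ I ∧
    (∀ θ : ℝ,
      deriv (fun x => Real.log (I x)) θ
        = -(1 - T * C) * Real.sin θ / Real.sqrt (L₉ θ)) := by
  have ha : (0:ℝ) < 1 - T * C := by linarith
  have hLpos : ∀ θ : ℝ, 0 < L₉ θ := by
    intro θ
    rw [hL₉]
    nlinarith [sq_nonneg (Real.cos θ)]
  -- base positivity
  have hbase : ∀ θ : ℝ, 0 < Real.sqrt (1 - T * C) * Real.cos θ + Real.sqrt (L₉ θ) := by
    intro θ
    have h1 : Real.sqrt ((1 - T * C) * (Real.cos θ) ^ 2) < Real.sqrt (L₉ θ) := by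
      apply Real.sqrt_lt_sqrt (by positivity)
      rw [hL₉]; nlinarith
    have h2 : Real.sqrt ((1 - T * C) * (Real.cos θ) ^ 2)
        = Real.sqrt (1 - T * C) * |Real.cos θ| := by
      rw [Real.sqrt_mul ha.le, Real.sqrt_sq_eq_abs]
    have h3 : -(Real.sqrt (1 - T * C) * Real.cos θ)
        ≤ Real.sqrt (1 - T * C) * |Real.cos θ| := by
      rw [← mul_neg]
      exact mul_le_mul_of_nonneg_left (neg_le_abs _) (Real.sqrt_nonneg _)
    nlinarith [h1, h2, h3]
  -- derivative of the base
  have hb : ∀ θ : ℝ, HasDerivAt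
      (fun x => Real.sqrt (1 - T * C) * Real.cos x + Real.sqrt (L₉ x))
      (Real.sqrt (1 - T * C) * (-Real.sin θ)
        + (1 - T * C) * (2 * Real.cos θ ^ 1 * -Real.sin θ)
          / (2 * Real.sqrt (L₉ θ))) θ := by
    intro θ
    have hinner : HasDerivAt (fun x => T * C - C + (1 - T * C) * (Real.cos x) ^ 2)
        ((1 - T * C) * (2 * Real.cos θ ^ 1 * -Real.sin θ)) θ := by
      exact (((Real.hasDerivAt_cos θ).pow 2).const_mul (1 - T * C)).const_add _
    have hsq : HasDerivAt (fun x => Real.sqrt (L₉ x))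
        ((1 - T * C) * (2 * Real.cos θ ^ 1 * -Real.sin θ) / (2 * Real.sqrt (L₉ θ))) θ := by
      have heq : (fun x => Real.sqrt (L₉ x))
          = fun x => Real.sqrt (T * C - C + (1 - T * C) * (Real.cos x) ^ 2) := by
        funext x; rw [hL₉]
      have := hinner.sqrt (by rw [← hL₉]; exact (hLpos θ).ne')
      rw [heq, hL₉]
      rw [← hL₉ θ] at this ⊢
      exact this
    exact ((Real.hasDerivAt_cos θ).const_mul (Real.sqrt (1 - T * C))).add hsq
  refine ⟨hbase, ?_, ?_⟩
  · have hIeq : I = fun x =>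
        (Real.sqrt (1 - T * C) * Real.cos x + Real.sqrt (L₉ x)) ^ Real.sqrt (1 - T * C) := by
      funext x; exact hI x
    rw [hIeq]
    intro θ
    exact ((hb θ).differentiableAt).rpow_const (Or.inl (hbase θ).ne')
  · intro θ
    have hlog : (fun x => Real.log (I x))
        = fun x => Real.sqrt (1 - T * C)
            * Real.log (Real.sqrt (1 - T * C) * Real.cos x + Real.sqrt (L₉ x)) := by
      funext x
      rw [hI x, Real.log_rpow (hbase x)]
    rw [hlog]
    have hd := (((hb θ).log (hbase θ).ne').const_mul (Real.sqrt (1 - T * C))).deriv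
    rw [hd]
    have hsa : Real.sqrt (1 - T * C) * Real.sqrt (1 - T * C) = 1 - T * C :=
      Real.mul_self_sqrt ha.le
    have hsL : Real.sqrt (L₉ θ) * Real.sqrt (L₉ θ) = L₉ θ :=
      Real.mul_self_sqrt (hLpos θ).le
    have hsLne : Real.sqrt (L₉ θ) ≠ 0 := (Real.sqrt_pos.mpr (hLpos θ)).ne'
    have hbne : Real.sqrt (1 - T * C) * Real.cos θ + Real.sqrt (L₉ θ) ≠ 0 := (hbase θ).ne'
    field_simp
    linear_combination (-Real.sin θ * Real.sqrt (L₉ θ)) * hsa
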